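/- arXiv:1701.01896 — 4 statements merged into one kernel-verified Lean document; each statement's English description precedes it below -/
import Mathlib

section
/- Let H be an N×N positive-definite Hermitian matrix over ℂ with spectral decomposition H = V Λ Vᴴ, where V is unitary and Λ = diag(λ₁, …, λ_N) with each λ_n > 0. Fix an integer t ≥ 0 and suppose H^t = Q R with Q unitary and R upper triangular with strictly positive real diagonal entries. If the last row of V is nonzero (i.e. ∑_{n=1}^N |V_{Nn}|² = 1 > 0), then the (N,N) entry of R satisfies R_{NN} = (∑_{n=1}^N λ_n^{−2t} |V_{Nn}|²)^{−1/2}, and the last row of U := Qᴴ V satisfies U_{Nn} = R_{NN} · V_{Nn} · λ_n^{−t} for every 1 ≤ n ≤ N. -/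
open Matrix
open scoped ComplexOrder

/-- `A = Q * R` is a QR factorization: `Q` unitary, `R` upper triangular with
strictly positive real diagonal entries. -/
def IsQRFact {N : ℕ} (A Q R : Matrix (Fin N) (Fin N) ℂ) : Prop :=
  A = Q * R ∧ Q ∈ Matrix.unitaryGroup (Fin N) ℂ ∧
    (∀ i j : Fin N, j < i → R i j = 0) ∧
    (∀ i : Fin N, (R i i).im = 0 ∧ 0 < (R i i).re)

/-- For a positive-definite Hermitian `H = V Λ Vᴴ` and a QR factorization `H^t = Q R`,
the `(N,N)` entry of `R` is `(∑ λ_n^{-2t} |V_{Nn}|²)^{-1/2}` and the last row of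
`U = Qᴴ V` satisfies `U_{Nn} = R_{NN} V_{Nn} λ_n^{-t}`. -/
theorem qr_last_row_formula {N : ℕ}
    (H V Q R : Matrix (Fin (N + 1)) (Fin (N + 1)) ℂ) (lam : Fin (N + 1) → ℝ)
    (hH : H.PosDef)
    (hV : V ∈ Matrix.unitaryGroup (Fin (N + 1)) ℂ)
    (hlam : ∀ n, 0 < lam n)
    (hspec : H = V * Matrix.diagonal (fun n => (lam n : ℂ)) * Vᴴ)
    (t : ℕ)
    (hQR : IsQRFact (H ^ t) Q R)
    (hrow : ∑ n, ‖V (Fin.last N) n‖ ^ 2 = 1) :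
    R (Fin.last N) (Fin.last N) =
      (((∑ n, lam n ^ (-(2 * t : ℤ)) * ‖V (Fin.last N) n‖ ^ 2) ^ (-(1 : ℝ) / 2)
        : ℝ) : ℂ) ∧
    ∀ n, (Qᴴ * V) (Fin.last N) n =
      R (Fin.last N) (Fin.last N) * V (Fin.last N) n * (lam n : ℂ) ^ (-(t : ℤ)) := by
  obtain ⟨hfac, hQ, htri, hdiag⟩ := hQR
  set L := Fin.last N with hLdef
  have hVV : V * Vᴴ = 1 := by simpa [Matrix.star_eq_conjTranspose] using mem_unitaryGroup_iff.mp hV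
  have hVV' : Vᴴ * V = 1 := by simpa [Matrix.star_eq_conjTranspose] using mem_unitaryGroup_iff'.mp hV
  have hQQ : Qᴴ * Q = 1 := by simpa [Matrix.star_eq_conjTranspose] using mem_unitaryGroup_iff'.mp hQ
  -- spectral decomposition of powers
  have hpow : ∀ s : ℕ, H ^ s = V * Matrix.diagonal (fun n => (lam n : ℂ) ^ s) * Vᴴ := by
    intro s
    induction s with
    | zero => simp [hVV, Matrix.diagonal_one]
    | succ s ih =>
      rw [pow_succ, ih, hspec]
      calc (V * Matrix.diagonal (fun n => (lam n:ℂ)^s) * Vᴴ) *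
            (V * Matrix.diagonal (fun n => (lam n:ℂ)) * Vᴴ)
          = V * (Matrix.diagonal (fun n => (lam n:ℂ)^s) * ((Vᴴ * V) *
              (Matrix.diagonal (fun n => (lam n:ℂ)) * Vᴴ))) := by
            simp only [Matrix.mul_assoc]
        _ = V * Matrix.diagonal (fun n => (lam n:ℂ)^(s+1)) * Vᴴ := by
            rw [hVV', Matrix.one_mul]
            simp only [← Matrix.mul_assoc, Matrix.diagonal_mul_diagonal, ← pow_succ]
  -- R V = (Qᴴ V) Λᵗ
  have hRV : R * V = (Qᴴ * V) * Matrix.diagonal (fun n => (lam n : ℂ) ^ t) := by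
    have h1 : Q * R * V = V * Matrix.diagonal (fun n => (lam n:ℂ)^t) := by
      rw [← hfac, hpow t, Matrix.mul_assoc, hVV', Matrix.mul_one]
    calc R * V = Qᴴ * (Q * R * V) := by
          rw [← Matrix.mul_assoc, ← Matrix.mul_assoc, hQQ, Matrix.one_mul]
      _ = (Qᴴ * V) * Matrix.diagonal (fun n => (lam n:ℂ)^t) := by
          rw [h1, Matrix.mul_assoc]
  have hkey : ∀ n, R L L * V L n = (Qᴴ * V) L n * (lam n : ℂ) ^ t := by
    intro n
    have h2 : (R * V) L n = ((Qᴴ * V) * Matrix.diagonal (fun n => (lam n:ℂ)^t)) L n := by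
      rw [hRV]
    rw [Matrix.mul_apply, Matrix.mul_diagonal, Finset.sum_eq_single L] at h2
    · exact h2
    · intro k _ hk
      rw [htri L k (lt_of_le_of_ne (Fin.le_last k) hk), zero_mul]
    · simp
  have hlamc : ∀ n, ((lam n : ℂ)) ≠ 0 := fun n => by exact_mod_cast (hlam n).ne'
  have hU : ∀ n, (Qᴴ * V) L n = R L L * V L n * (lam n:ℂ) ^ (-(t:ℤ)) := by
    intro n
    rw [_root_.zpow_neg, zpow_natCast]
    rw [hkey n, mul_assoc, mul_inv_cancel₀ (pow_ne_zero _ (hlamc n)), mul_one]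
  refine ⟨?_, hU⟩
  -- U is unitary
  have hUmem : Qᴴ * V ∈ Matrix.unitaryGroup (Fin (N+1)) ℂ := by
    have h := Unitary.star_mem hQ
    rw [Matrix.star_eq_conjTranspose] at h
    exact mul_mem h hV
  have hUU : (Qᴴ * V) * (Qᴴ * V)ᴴ = 1 := by
    have h := mem_unitaryGroup_iff.mp hUmem
    rwa [Matrix.star_eq_conjTranspose] at h
  have hsumR : ∑ n, Complex.normSq ((Qᴴ * V) L n) = 1 := by
    have h2 : ((Qᴴ * V) * (Qᴴ * V)ᴴ) L L = 1 := by rw [hUU]; simp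
    rw [Matrix.mul_apply] at h2
    simp only [Matrix.conjTranspose_apply, Complex.star_def, Complex.mul_conj] at h2
    exact_mod_cast h2
  set r := (R L L).re with hrdef
  have hrpos : 0 < r := (hdiag L).2
  have hRr : R L L = (r : ℂ) := by
    exact Complex.ext (by simp [hrdef]) (by simp [(hdiag L).1])
  have hz : ∀ n, lam n ^ (-(2 * t : ℤ)) = ((lam n ^ t)⁻¹) ^ 2 := by
    intro n
    rw [inv_pow, ← pow_mul, ← zpow_natCast (lam n) (t * 2), ← _root_.zpow_neg]
    congr 1
    push_cast
    ring
  have hterm : ∀ n, Complex.normSq ((Qᴴ * V) L n)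
      = r ^ 2 * (lam n ^ (-(2 * t : ℤ)) * ‖V L n‖ ^ 2) := by
    intro n
    rw [hU n, hRr, Complex.normSq_eq_norm_sq, norm_mul, norm_mul,
      Complex.norm_real,
      norm_zpow, Complex.norm_real, Real.norm_of_nonneg hrpos.le, Real.norm_of_nonneg (hlam n).le,
      _root_.zpow_neg, zpow_natCast, hz n]
    ring
  set S := ∑ n, lam n ^ (-(2 * t : ℤ)) * ‖V L n‖ ^ 2 with hSdef
  have hr2S : r ^ 2 * S = 1 := by
    rw [hSdef, Finset.mul_sum, ← hsumR]
    exact Finset.sum_congr rfl fun n _ => (hterm n).symm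
  have hS : S = (r ^ 2)⁻¹ := eq_inv_of_mul_eq_one_left (by rw [mul_comm]; exact hr2S)
  have hS2 : S = r ^ (-2 : ℝ) := by
    rw [hS, ← Real.rpow_natCast r 2, ← Real.rpow_neg hrpos.le]
    norm_num
  have hfin : S ^ (-(1 : ℝ) / 2) = r := by
    rw [hS2, ← Real.rpow_mul hrpos.le]
    norm_num
  rw [hRr, hfin]
end

section
/- Let H be an N×N positive-definite Hermitian matrix over ℂ with spectral decomposition H = V Λ Vᴴ, where V is unitary and Λ = diag(λ₁, …, λ_N) with each λ_n > 0, and set β_n = |V_{Nn}|. Fix an integer t ≥ 0, let H^t = Q R be a QR factorization, and set X = Qᴴ H Q. Then ∑_{n=1}^{N−1} |X_{Nn}|² = (X²)_{NN} − (X_{NN})², and this quantity equals (∑_{n=1}^N λ_n^{−2t+2} β_n²)/(∑_{n=1}^N λ_n^{−2t} β_n²) − (∑_{n=1}^N λ_n^{−2t+1} β_n²)²/(∑_{n=1}^N λ_n^{−2t} β_n²)². -/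
open Matrix
open scoped ComplexOrder

/-- For a positive-definite Hermitian `H = V Λ Vᴴ` with `β_n = |V_{Nn}|`, a QR
factorization `H^t = Q R`, and `X = Qᴴ H Q`, the sum of the squared moduli of the
off-diagonal entries of the last row of `X` equals `(X²)_{NN} - (X_{NN})²`, which
equals the explicit eigenvalue expression. -/
theorem qr_error_formula {N : ℕ}
    (H V Q R : Matrix (Fin (N + 1)) (Fin (N + 1)) ℂ) (lam : Fin (N + 1) → ℝ)
    (hH : H.PosDef)
    (hV : V ∈ Matrix.unitaryGroup (Fin (N + 1)) ℂ)
    (hlam : ∀ n, 0 < lam n)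
    (hspec : H = V * Matrix.diagonal (fun n => (lam n : ℂ)) * Vᴴ)
    (beta : Fin (N + 1) → ℝ)
    (hbeta : ∀ n, beta n = ‖V (Fin.last N) n‖)
    (t : ℕ)
    (hQR : IsQRFact (H ^ t) Q R)
    (X : Matrix (Fin (N + 1)) (Fin (N + 1)) ℂ)
    (hX : X = Qᴴ * H * Q) :
    ((∑ n ∈ Finset.univ.erase (Fin.last N), ‖X (Fin.last N) n‖ ^ 2 : ℝ) : ℂ) =
      (X * X) (Fin.last N) (Fin.last N) - X (Fin.last N) (Fin.last N) ^ 2 ∧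
    (∑ n ∈ Finset.univ.erase (Fin.last N), ‖X (Fin.last N) n‖ ^ 2 : ℝ) =
      (∑ n, lam n ^ (-(2 * t : ℤ) + 2) * beta n ^ 2) /
        (∑ n, lam n ^ (-(2 * t : ℤ)) * beta n ^ 2) -
      (∑ n, lam n ^ (-(2 * t : ℤ) + 1) * beta n ^ 2) ^ 2 /
        (∑ n, lam n ^ (-(2 * t : ℤ)) * beta n ^ 2) ^ 2 := by
  obtain ⟨hfact, hQu, hRtri, hRdiag⟩ := hQR
  set Nl : Fin (N + 1) := Fin.last N with hNl
  set D : Matrix (Fin (N + 1)) (Fin (N + 1)) ℂ :=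
    Matrix.diagonal (fun n => (lam n : ℂ)) with hDdef
  have hQQ : Qᴴ * Q = 1 := mem_unitaryGroup_iff'.mp hQu
  have hQQ' : Q * Qᴴ = 1 := mem_unitaryGroup_iff.mp hQu
  have hVV : Vᴴ * V = 1 := mem_unitaryGroup_iff'.mp hV
  have hVV' : V * Vᴴ = 1 := mem_unitaryGroup_iff.mp hV
  have hHerm : Hᴴ = H := hH.isHermitian
  have hstar : ∀ z : ℂ, z * star z = ((‖z‖ ^ 2 : ℝ) : ℂ) := fun z => by
    rw [Complex.sq_norm]; exact Complex.mul_conj z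
  have cancelV : ∀ M : Matrix (Fin (N+1)) (Fin (N+1)) ℂ, Vᴴ * (V * M) = M := by
    intro M; rw [← mul_assoc, hVV, one_mul]
  have cancelV' : ∀ M : Matrix (Fin (N+1)) (Fin (N+1)) ℂ, V * (Vᴴ * M) = M := by
    intro M; rw [← mul_assoc, hVV', one_mul]
  have cancelQ' : ∀ M : Matrix (Fin (N+1)) (Fin (N+1)) ℂ, Q * (Qᴴ * M) = M := by
    intro M; rw [← mul_assoc, hQQ', one_mul]
  -- powers of H
  have hpow : ∀ k : ℕ, H ^ k = V * D ^ k * Vᴴ := by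
    intro k
    induction k with
    | zero => simpa using hVV'.symm
    | succ k ih =>
      rw [pow_succ, ih, hspec, pow_succ]
      simp only [mul_assoc, cancelV, cancelV']
  -- QR consequences
  have hHtQ : H ^ t * Q = Rᴴ := by
    have h1 : H ^ t = Rᴴ * Qᴴ := by
      have h := congrArg conjTranspose hfact
      rwa [conjTranspose_pow, hHerm, conjTranspose_mul] at h
    rw [h1, mul_assoc, hQQ, mul_one]
  set r : ℝ := (R Nl Nl).re with hrdef
  have hrpos : 0 < r := (hRdiag Nl).2
  have hrne : r ≠ 0 := ne_of_gt hrpos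
  have hRr : R Nl Nl = (r : ℂ) := by
    have h := (hRdiag Nl).1
    apply Complex.ext <;> simp [hrdef, h]
  set C : Matrix (Fin (N + 1)) (Fin (N + 1)) ℂ := Vᴴ * Q with hCdef
  have hkey : D ^ t * C = Vᴴ * Rᴴ := by
    rw [← hHtQ, hpow t, hCdef]
    simp only [mul_assoc, cancelV]
  have hc : ∀ n, (lam n : ℂ) ^ t * C n Nl = star (V Nl n) * (r : ℂ) := by
    intro n
    have h1 := congrFun (congrFun hkey n) Nl
    rw [hDdef, diagonal_pow, diagonal_mul, Pi.pow_apply, mul_apply] at h1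
    rw [h1, Finset.sum_eq_single Nl]
    · simp [conjTranspose_apply, hRr]
    · intro k _ hk
      have hz : R Nl k = 0 := hRtri Nl k (Fin.lt_last_iff_ne_last.mpr hk)
      simp [conjTranspose_apply, hz]
    · simp
  -- squared moduli of the last column of C
  set s : Fin (N + 1) → ℝ := fun n => ‖C n Nl‖ ^ 2 with hsdef
  have hlamt : ∀ n, (lam n ^ t) ≠ 0 := fun n => pow_ne_zero _ (ne_of_gt (hlam n))
  have hzp : ∀ n, lam n ^ (-(2 * t : ℤ)) = ((lam n ^ t) ^ 2)⁻¹ := by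
    intro n
    rw [_root_.zpow_neg]
    congr 1
    rw [show (2 * (t : ℤ)) = ((t * 2 : ℕ) : ℤ) by push_cast; ring, zpow_natCast, pow_mul]
  have habs : ∀ n, s n = r ^ 2 * (lam n ^ (-(2 * t : ℤ)) * beta n ^ 2) := by
    intro n
    have h := congrArg (‖·‖) (hc n)
    rw [norm_mul, norm_mul, norm_pow, Complex.norm_of_nonneg (hlam n).le,
      Complex.norm_of_nonneg hrpos.le] at h
    have hst : ‖star (V Nl n)‖ = beta n := by
      rw [hbeta n, hNl, Complex.star_def, Complex.norm_conj]
    rw [hst] at h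
    have hC2 : ‖C n Nl‖ = beta n * r / lam n ^ t := by
      rw [eq_div_iff (hlamt n)]
      linarith [h]
    simp only [hsdef]
    rw [hC2, hzp n, div_pow]
    field_simp
  -- unitarity consequences for C
  have hCC : Cᴴ * C = 1 := by
    rw [hCdef, conjTranspose_mul, conjTranspose_conjTranspose, mul_assoc, cancelV', hQQ]
  have hCC' : C * Cᴴ = 1 := by
    rw [hCdef, conjTranspose_mul, conjTranspose_conjTranspose, mul_assoc, cancelQ', hVV]
  have cancelC' : ∀ M : Matrix (Fin (N+1)) (Fin (N+1)) ℂ, C * (Cᴴ * M) = M := by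
    intro M; rw [← mul_assoc, hCC', one_mul]
  have hXC : X = Cᴴ * D * C := by
    rw [hX, hspec, hCdef, conjTranspose_mul, conjTranspose_conjTranspose]
    simp only [mul_assoc]
  have hX2C : X * X = Cᴴ * (D * D) * C := by
    rw [hXC]
    simp only [mul_assoc, cancelC']
  -- generic diagonal entry computation
  have hentry : ∀ d : Fin (N + 1) → ℂ,
      (Cᴴ * Matrix.diagonal d * C) Nl Nl = ∑ n, d n * ((s n : ℝ) : ℂ) := by
    intro d
    rw [mul_assoc, mul_apply]
    refine Finset.sum_congr rfl fun n _ => ?_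
    rw [diagonal_mul, conjTranspose_apply]
    calc star (C n Nl) * (d n * C n Nl)
        = d n * (C n Nl * star (C n Nl)) := by ring
      _ = d n * ((s n : ℝ) : ℂ) := by rw [hstar]
  have hXNN : X Nl Nl = ((∑ n, lam n * s n : ℝ) : ℂ) := by
    rw [hXC, hDdef, hentry]
    push_cast
    rfl
  have hXXNN : (X * X) Nl Nl = ((∑ n, lam n ^ 2 * s n : ℝ) : ℂ) := by
    rw [hX2C, hDdef, diagonal_mul_diagonal, hentry]
    push_cast
    exact Finset.sum_congr rfl fun n _ => by ring
  -- Hermitian property of X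
  have hXh : Xᴴ = X := by
    rw [hX]
    simp only [conjTranspose_mul, conjTranspose_conjTranspose, hHerm, mul_assoc]
  have hXstar : ∀ n, X n Nl = star (X Nl n) := by
    intro n
    have h := congrFun (congrFun hXh n) Nl
    rw [conjTranspose_apply] at h
    exact h.symm
  -- Part 1
  have h2 : (X * X) Nl Nl = ∑ n, ((‖X Nl n‖ ^ 2 : ℝ) : ℂ) := by
    rw [mul_apply]
    exact Finset.sum_congr rfl fun n _ => by rw [hXstar n, hstar]
  have h3 : X Nl Nl ^ 2 = ((‖X Nl Nl‖ ^ 2 : ℝ) : ℂ) := by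
    rw [sq]
    nth_rewrite 2 [hXstar Nl]
    rw [hstar]
  have hgoal1 : ((∑ n ∈ Finset.univ.erase Nl, ‖X Nl n‖ ^ 2 : ℝ) : ℂ) =
      (X * X) Nl Nl - X Nl Nl ^ 2 := by
    rw [h2, h3, ← Finset.sum_erase_add _ _ (Finset.mem_univ Nl)]
    push_cast
    ring
  refine ⟨hgoal1, ?_⟩
  -- Part 2
  set S0 : ℝ := ∑ n, lam n ^ (-(2 * t : ℤ)) * beta n ^ 2 with hS0def
  set S1 : ℝ := ∑ n, lam n ^ (-(2 * t : ℤ) + 1) * beta n ^ 2 with hS1def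
  set S2 : ℝ := ∑ n, lam n ^ (-(2 * t : ℤ) + 2) * beta n ^ 2 with hS2def
  have hS0sum : ∑ n, s n = r ^ 2 * S0 := by
    rw [hS0def, Finset.mul_sum]
    exact Finset.sum_congr rfl fun n _ => habs n
  have hS1sum : ∑ n, lam n * s n = r ^ 2 * S1 := by
    rw [hS1def, Finset.mul_sum]
    refine Finset.sum_congr rfl fun n _ => ?_
    rw [habs n, zpow_add₀ (ne_of_gt (hlam n)), zpow_one]
    ring
  have hS2sum : ∑ n, lam n ^ 2 * s n = r ^ 2 * S2 := by
    rw [hS2def, Finset.mul_sum]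
    refine Finset.sum_congr rfl fun n _ => ?_
    rw [habs n, zpow_add₀ (ne_of_gt (hlam n)), zpow_two]
    ring
  have hone : r ^ 2 * S0 = 1 := by
    have h1 := congrFun (congrFun hCC Nl) Nl
    rw [mul_apply, one_apply_eq] at h1
    have h2' : ∑ k, (Cᴴ) Nl k * C k Nl = ((∑ k, s k : ℝ) : ℂ) := by
      push_cast
      refine Finset.sum_congr rfl fun k _ => ?_
      rw [conjTranspose_apply, mul_comm, hstar]
    rw [h2'] at h1
    have h3' : (∑ k, s k) = 1 := by exact_mod_cast h1
    rw [← hS0sum]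
    exact h3'
  have hcomplex : ((∑ n ∈ Finset.univ.erase Nl, ‖X Nl n‖ ^ 2 : ℝ) : ℂ) =
      (((r ^ 2 * S2 - (r ^ 2 * S1) ^ 2 : ℝ)) : ℂ) := by
    rw [hgoal1, hXXNN, hXNN, hS2sum, hS1sum]
    push_cast
    ring
  have hreal : (∑ n ∈ Finset.univ.erase Nl, ‖X Nl n‖ ^ 2 : ℝ) =
      r ^ 2 * S2 - (r ^ 2 * S1) ^ 2 := by exact_mod_cast hcomplex
  have hS0eq : S0 = (r ^ 2)⁻¹ := by
    field_simp [hrne]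
    linarith [hone]
  rw [hreal, hS0eq]
  field_simp
end

section
/- Fix reals λ₋ > 0, p > 0 and R > 0. There exist a constant C > 0 and N₀ ∈ ℕ such that for all N ≥ N₀ and all reals ξ₁ ≤ ξ₂ ≤ ξ₃ with |ξ_j| ≤ R for j = 1,2,3, setting λ_j = λ₋ + N^{−2/3} ξ_j (which are positive for N large), one has |(λ₃ − λ₂) − p(λ₂ − λ₁) + λ₋·(λ₂/λ₃ − (λ₁/λ₂)^p)| ≤ C N^{−4/3}. -/
lemma abs_log_one_add_le {x : ℝ} (hx : |x| ≤ 1/2) : |Real.log (1+x)| ≤ 2 * |x| := by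
  have hx1 : -(1/2) ≤ x := neg_le_of_abs_le hx
  have hx2 : x ≤ 1/2 := le_of_abs_le hx
  have h0 : (0:ℝ) < 1 + x := by linarith
  have hub : Real.log (1+x) ≤ x := by
    have := Real.log_le_sub_one_of_pos h0; linarith
  have hlb : x / (1+x) ≤ Real.log (1+x) := by
    have h0' : (0:ℝ) < (1+x)⁻¹ := by positivity
    have h1 := Real.log_le_sub_one_of_pos h0'
    rw [Real.log_inv] at h1
    have h2 : x ≤ (1+x) * Real.log (1+x) := by
      have h3 := mul_le_mul_of_nonneg_left h1 (le_of_lt h0)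
      rw [mul_sub, mul_inv_cancel₀ (ne_of_gt h0), mul_neg] at h3
      linarith
    rw [div_le_iff₀ h0]
    linarith [mul_comm (1+x) (Real.log (1+x))]
  rw [abs_le]
  constructor
  · refine le_trans ?_ hlb
    rcases le_or_gt 0 x with h | h
    · have : 0 ≤ x / (1+x) := by positivity
      have : 0 ≤ |x| := abs_nonneg x
      linarith
    · rw [abs_of_neg h, le_div_iff₀ h0]; nlinarith
  · calc Real.log (1+x) ≤ x := hub
      _ ≤ |x| := le_abs_self x
      _ ≤ 2 * |x| := by have := abs_nonneg x; linarith

lemma rpow_one_add_sub_one_abs_le (q : ℝ) {x : ℝ} (hx : |x| ≤ 1/(2*(|q|+1))) :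
    |(1+x) ^ q - 1| ≤ (4*|q|+1) * |x| := by
  have hq0 : 0 ≤ |q| := abs_nonneg q
  have hδ : 1/(2*(|q|+1)) ≤ 1/2 := by
    rw [div_le_div_iff₀ (by positivity) (by norm_num)]; nlinarith
  have hx2 : |x| ≤ 1/2 := le_trans hx hδ
  have hx1 : -(1/2) ≤ x := neg_le_of_abs_le hx2
  have h0 : (0:ℝ) < 1 + x := by linarith
  have hlog : |Real.log (1+x)| ≤ 2 * |x| := abs_log_one_add_le hx2
  have hy : |Real.log (1+x) * q| ≤ 1 := by
    rw [abs_mul]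
    calc |Real.log (1+x)| * |q| ≤ 2 * |x| * |q| := by
          exact mul_le_mul_of_nonneg_right (by linarith) hq0
      _ ≤ 2 * (1/(2*(|q|+1))) * |q| := by
          have := abs_nonneg x
          exact mul_le_mul_of_nonneg_right (by linarith) hq0
      _ ≤ 1 := by
          have he : 2 * (1/(2*(|q|+1))) * |q| = |q|/(|q|+1) := by
            field_simp
          rw [he, div_le_one (by positivity)]; linarith
  have hrw : (1+x) ^ q = Real.exp (Real.log (1+x) * q) := Real.rpow_def_of_pos h0 q
  rw [hrw]
  calc |Real.exp (Real.log (1+x) * q) - 1| ≤ 2 * |Real.log (1+x) * q| :=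
        Real.abs_exp_sub_one_le hy
    _ ≤ 2 * (2 * |x| * |q|) := by
        rw [abs_mul]
        have := mul_le_mul_of_nonneg_right hlog hq0
        linarith
    _ ≤ (4*|q|+1) * |x| := by nlinarith [abs_nonneg x]

lemma rpow_taylor2 (p : ℝ) (hp : 0 < p) :
    ∀ x : ℝ, |x| ≤ 1/(2*(|p-1|+1)) →
      |(1+x) ^ p - 1 - p*x| ≤ (p*(4*|p-1|+1)) * x^2 := by
  intro x hx
  have hq0 : 0 ≤ |p-1| := abs_nonneg _
  have hδ : 1/(2*(|p-1|+1)) ≤ 1/2 := by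
    rw [div_le_div_iff₀ (by positivity) (by norm_num)]; nlinarith
  have hx2 : |x| ≤ 1/2 := le_trans hx hδ
  have hx1 : -(1/2) ≤ x := neg_le_of_abs_le hx2
  have hderiv : ∀ t : ℝ, -(1/2) ≤ t → HasDerivAt (fun s : ℝ => (1+s) ^ p)
      (p*(1+t)^(p-1)) t := by
    intro t ht
    have h0 : (1:ℝ)+t ≠ 0 := by intro h; rw [add_eq_zero_iff_eq_neg] at h; linarith [h]
    have h1 : HasDerivAt (fun y : ℝ => y ^ p) (p*(1+t)^(p-1)) (1+t) :=
      Real.hasDerivAt_rpow_const (Or.inl h0)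
    have h2 : HasDerivAt (fun y : ℝ => 1+y) 1 t := (hasDerivAt_id t).const_add 1
    have := h1.comp t h2; rw [mul_one] at this; exact this
  rcases lt_trichotomy x 0 with hlt | heq0 | hgt
  · obtain ⟨c, hc, hceq⟩ := exists_hasDerivAt_eq_slope (fun s : ℝ => (1+s) ^ p)
      (fun t => p*(1+t)^(p-1)) hlt
      (fun t ht => ((hderiv t (by rcases ht with ⟨h1', _⟩; linarith)).continuousAt).continuousWithinAt)
      (fun t ht => hderiv t (by rcases ht with ⟨h1', _⟩; linarith))
    have hcx : |c| ≤ |x| := by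
      rcases hc with ⟨h1', h2'⟩
      rw [abs_of_neg (by linarith), abs_of_neg hlt]; linarith
    have heq : (1+x) ^ p - 1 = p*(1+c)^(p-1) * x := by
      rw [eq_div_iff (sub_ne_zero_of_ne (Ne.symm (ne_of_lt hlt)))] at hceq
      simp only [add_zero, Real.one_rpow] at hceq
      linear_combination hceq
    have key : (1+x) ^ p - 1 - p*x = p*x*((1+c)^(p-1) - 1) := by
      linear_combination heq
    rw [key, abs_mul, abs_mul, abs_of_pos hp]
    have hb := rpow_one_add_sub_one_abs_le (p-1) (le_trans hcx hx)
    have h1 : |(1+c)^(p-1) - 1| ≤ (4*|p-1|+1) * |x| :=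
      le_trans hb (mul_le_mul_of_nonneg_left hcx (by positivity))
    have hx0 : 0 ≤ |x| := abs_nonneg x
    calc p * |x| * |(1+c)^(p-1) - 1| ≤ p * |x| * ((4*|p-1|+1) * |x|) := by
          exact mul_le_mul_of_nonneg_left h1 (by positivity)
      _ = (p*(4*|p-1|+1)) * x^2 := by rw [← sq_abs x]; ring
  · subst heq0; simp
  · obtain ⟨c, hc, hceq⟩ := exists_hasDerivAt_eq_slope (fun s : ℝ => (1+s) ^ p)
      (fun t => p*(1+t)^(p-1)) hgt
      (fun t ht => ((hderiv t (by rcases ht with ⟨h1', _⟩; linarith)).continuousAt).continuousWithinAt)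
      (fun t ht => hderiv t (by rcases ht with ⟨h1', _⟩; linarith))
    have hcx : |c| ≤ |x| := by
      rcases hc with ⟨h1', h2'⟩
      rw [abs_of_pos (by linarith), abs_of_pos hgt]; linarith
    have heq : (1+x) ^ p - 1 = p*(1+c)^(p-1) * x := by
      rw [eq_div_iff (sub_ne_zero_of_ne (ne_of_gt hgt))] at hceq
      simp only [add_zero, Real.one_rpow, sub_zero] at hceq
      linear_combination -hceq
    have key : (1+x) ^ p - 1 - p*x = p*x*((1+c)^(p-1) - 1) := by
      linear_combination heq
    rw [key, abs_mul, abs_mul, abs_of_pos hp]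
    have hb := rpow_one_add_sub_one_abs_le (p-1) (le_trans hcx hx)
    have h1 : |(1+c)^(p-1) - 1| ≤ (4*|p-1|+1) * |x| :=
      le_trans hb (mul_le_mul_of_nonneg_left hcx (by positivity))
    have hx0 : 0 ≤ |x| := abs_nonneg x
    calc p * |x| * |(1+c)^(p-1) - 1| ≤ p * |x| * ((4*|p-1|+1) * |x|) := by
          exact mul_le_mul_of_nonneg_left h1 (by positivity)
      _ = (p*(4*|p-1|+1)) * x^2 := by rw [← sq_abs x]; ring
set_option maxHeartbeats 2000000 in
/-- Uniform deterministic expansion: for bounded rescaled fluctuations `ξ₁ ≤ ξ₂ ≤ ξ₃`,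
with `λ_j = λ₋ + N^{-2/3} ξ_j`, one has
`|(λ₃-λ₂) - p(λ₂-λ₁) + λ₋ (λ₂/λ₃ - (λ₁/λ₂)^p)| ≤ C N^{-4/3}`. -/
theorem gap_condition_expansion (lamMinus p R : ℝ)
    (hlam : 0 < lamMinus) (hp : 0 < p) (hR : 0 < R) :
    ∃ C > 0, ∃ N₀ : ℕ, ∀ N : ℕ, N₀ ≤ N →
      ∀ ξ₁ ξ₂ ξ₃ : ℝ, ξ₁ ≤ ξ₂ → ξ₂ ≤ ξ₃ →
        |ξ₁| ≤ R → |ξ₂| ≤ R → |ξ₃| ≤ R →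
        ∀ lam₁ lam₂ lam₃ : ℝ,
          lam₁ = lamMinus + (N : ℝ) ^ (-(2 : ℝ) / 3) * ξ₁ →
          lam₂ = lamMinus + (N : ℝ) ^ (-(2 : ℝ) / 3) * ξ₂ →
          lam₃ = lamMinus + (N : ℝ) ^ (-(2 : ℝ) / 3) * ξ₃ →
          |(lam₃ - lam₂) - p * (lam₂ - lam₁) +
              lamMinus * (lam₂ / lam₃ - (lam₁ / lam₂) ^ p)| ≤
            C * (N : ℝ) ^ (-(4 : ℝ) / 3) := by
  set δ : ℝ := 1/(2*(|p-1|+1)) with hδdef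
  set K : ℝ := p*(4*|p-1|+1) with hKdef
  have hδpos : 0 < δ := by positivity
  have hKpos : 0 < K := by positivity
  set δ' : ℝ := min (lamMinus/(2*R)) (δ*lamMinus/(4*R)) with hδ'def
  have hδ'pos : 0 < δ' := lt_min (by positivity) (by positivity)
  set C : ℝ := (4*R^2 + 4*p*R^2 + 16*K*R^2)/lamMinus + 1 with hCdef
  have hCpos : 0 < C := by positivity
  -- find N₀
  have htend : Filter.Tendsto (fun N : ℕ => (N:ℝ) ^ (-(2:ℝ)/3)) Filter.atTop (nhds 0) := by
    have h := (tendsto_rpow_neg_atTop (y := (2:ℝ)/3) (by norm_num)).comp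
      tendsto_natCast_atTop_atTop
    simpa [neg_div, Function.comp_def] using h
  have hev : ∀ᶠ N : ℕ in Filter.atTop, (N:ℝ) ^ (-(2:ℝ)/3) < δ' := by
    exact htend.eventually_lt_const hδ'pos
  obtain ⟨N₁, hN₁⟩ := Filter.eventually_atTop.mp hev
  refine ⟨C, hCpos, max N₁ 1, ?_⟩
  intro N hN ξ₁ ξ₂ ξ₃ h12 h23 hb1 hb2 hb3 lam₁ lam₂ lam₃ hl1 hl2 hl3
  set ε : ℝ := (N:ℝ) ^ (-(2:ℝ)/3) with hεdef
  have hN1 : 1 ≤ N := le_trans (le_max_right _ _) hN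
  have hNpos : (0:ℝ) < N := by exact_mod_cast Nat.lt_of_lt_of_le Nat.zero_lt_one hN1
  have hε0 : 0 ≤ ε := Real.rpow_nonneg (le_of_lt hNpos) _
  have hεδ' : ε < δ' := hN₁ N (le_trans (le_max_left _ _) hN)
  have hεa : ε * R ≤ lamMinus/2 := by
    have h1 : ε ≤ lamMinus/(2*R) := le_of_lt (lt_of_lt_of_le hεδ' (min_le_left _ _))
    calc ε * R ≤ lamMinus/(2*R) * R := mul_le_mul_of_nonneg_right h1 (le_of_lt hR)
      _ = lamMinus/2 := by field_simp
  have hεb : 4*R*ε/lamMinus ≤ δ := by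
    have h1 : ε ≤ δ*lamMinus/(4*R) := le_of_lt (lt_of_lt_of_le hεδ' (min_le_right _ _))
    rw [div_le_iff₀ hlam]
    calc 4*R*ε ≤ 4*R*(δ*lamMinus/(4*R)) := by
          exact mul_le_mul_of_nonneg_left h1 (by positivity)
      _ = δ * lamMinus := by field_simp
  -- bounds on ξ's
  obtain ⟨hb1l, hb1r⟩ := abs_le.mp hb1
  obtain ⟨hb2l, hb2r⟩ := abs_le.mp hb2
  obtain ⟨hb3l, hb3r⟩ := abs_le.mp hb3
  have hεR : ∀ ξ : ℝ, |ξ| ≤ R → |ε * ξ| ≤ ε * R := by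
    intro ξ hξ
    rw [abs_mul, abs_of_nonneg hε0]
    exact mul_le_mul_of_nonneg_left hξ hε0
  have hl2pos : lamMinus/2 ≤ lam₂ := by
    rw [hl2]
    have := hεR ξ₂ hb2
    have := neg_le_of_abs_le (hεR ξ₂ hb2)
    linarith
  have hl3pos : lamMinus/2 ≤ lam₃ := by
    rw [hl3]
    have := neg_le_of_abs_le (hεR ξ₃ hb3)
    linarith
  have h2pos : 0 < lam₂ := lt_of_lt_of_le (by linarith) hl2pos
  have h3pos : 0 < lam₃ := lt_of_lt_of_le (by linarith) hl3pos
  -- the Taylor variable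
  set x : ℝ := (lam₁ - lam₂)/lam₂ with hxdef
  have hxabs : |x| ≤ 4*R*ε/lamMinus := by
    rw [hxdef, abs_div, abs_of_pos h2pos]
    have hnum : |lam₁ - lam₂| ≤ 2*R*ε := by
      have : lam₁ - lam₂ = ε * (ξ₁ - ξ₂) := by rw [hl1, hl2]; ring
      rw [this, abs_mul, abs_of_nonneg hε0]
      have : |ξ₁ - ξ₂| ≤ 2*R := abs_le.mpr ⟨by linarith, by linarith⟩
      nlinarith
    calc |lam₁ - lam₂| / lam₂ ≤ (2*R*ε) / (lamMinus/2) :=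
          div_le_div₀ (by positivity) hnum (by linarith) hl2pos
      _ = 4*R*ε/lamMinus := by field_simp; ring
  have hxδ : |x| ≤ δ := le_trans hxabs hεb
  have htaylor := rpow_taylor2 p hp x hxδ
  have hbase : 1 + x = lam₁ / lam₂ := by
    rw [hxdef]; field_simp; ring
  rw [hbase] at htaylor
  set r : ℝ := (lam₁/lam₂) ^ p - 1 - p*x with hrdef
  -- key algebraic identity
  have hE : (lam₃ - lam₂) - p * (lam₂ - lam₁) +
      lamMinus * (lam₂ / lam₃ - (lam₁ / lam₂) ^ p) =
      (lam₃ - lam₂) * ((lam₃ - lamMinus)/lam₃)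
      + p * (lam₂ - lam₁) * ((lamMinus - lam₂)/lam₂)
      - lamMinus * r := by
    rw [hrdef, hxdef]
    field_simp
    ring
  rw [hE]
  -- bound each term
  have hT1 : |(lam₃ - lam₂) * ((lam₃ - lamMinus)/lam₃)| ≤ (2*R*ε) * (2*R*ε/lamMinus) := by
    rw [abs_mul]
    have ha : |lam₃ - lam₂| ≤ 2*R*ε := by
      have : lam₃ - lam₂ = ε * (ξ₃ - ξ₂) := by rw [hl2, hl3]; ring
      rw [this, abs_mul, abs_of_nonneg hε0]
      have : |ξ₃ - ξ₂| ≤ 2*R := abs_le.mpr ⟨by linarith, by linarith⟩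
      nlinarith
    have hb : |(lam₃ - lamMinus)/lam₃| ≤ 2*R*ε/lamMinus := by
      rw [abs_div, abs_of_pos h3pos]
      have hnum : |lam₃ - lamMinus| ≤ R*ε := by
        have : lam₃ - lamMinus = ε * ξ₃ := by rw [hl3]; ring
        rw [this, abs_mul, abs_of_nonneg hε0]
        nlinarith
      calc |lam₃ - lamMinus| / lam₃ ≤ (R*ε) / (lamMinus/2) :=
            div_le_div₀ (by positivity) hnum (by linarith) hl3pos
        _ = 2*R*ε/lamMinus := by field_simp
    exact mul_le_mul ha hb (abs_nonneg _) (by positivity)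
  have hT2 : |p * (lam₂ - lam₁) * ((lamMinus - lam₂)/lam₂)| ≤ p * (2*R*ε) * (2*R*ε/lamMinus) := by
    rw [abs_mul, abs_mul, abs_of_pos hp]
    have ha : |lam₂ - lam₁| ≤ 2*R*ε := by
      have : lam₂ - lam₁ = ε * (ξ₂ - ξ₁) := by rw [hl1, hl2]; ring
      rw [this, abs_mul, abs_of_nonneg hε0]
      have : |ξ₂ - ξ₁| ≤ 2*R := abs_le.mpr ⟨by linarith, by linarith⟩
      nlinarith
    have hb : |(lamMinus - lam₂)/lam₂| ≤ 2*R*ε/lamMinus := by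
      rw [abs_div, abs_of_pos h2pos]
      have hnum : |lamMinus - lam₂| ≤ R*ε := by
        have : lamMinus - lam₂ = -(ε * ξ₂) := by rw [hl2]; ring
        rw [this, abs_neg, abs_mul, abs_of_nonneg hε0]
        nlinarith
      calc |lamMinus - lam₂| / lam₂ ≤ (R*ε) / (lamMinus/2) :=
            div_le_div₀ (by positivity) hnum (by linarith) hl2pos
        _ = 2*R*ε/lamMinus := by field_simp
    have h1 := mul_le_mul ha hb (abs_nonneg _) (by positivity)
    calc p * |lam₂ - lam₁| * |(lamMinus - lam₂)/lam₂|
        = p * (|lam₂ - lam₁| * |(lamMinus - lam₂)/lam₂|) := by ring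
      _ ≤ p * ((2*R*ε) * (2*R*ε/lamMinus)) := mul_le_mul_of_nonneg_left h1 (le_of_lt hp)
      _ = p * (2*R*ε) * (2*R*ε/lamMinus) := by ring
  have hT3 : |lamMinus * r| ≤ lamMinus * (K * (4*R*ε/lamMinus)^2) := by
    rw [abs_mul, abs_of_pos hlam]
    refine mul_le_mul_of_nonneg_left ?_ (le_of_lt hlam)
    calc |r| ≤ K * x^2 := htaylor
      _ ≤ K * (4*R*ε/lamMinus)^2 := by
          refine mul_le_mul_of_nonneg_left ?_ (le_of_lt hKpos)
          rw [← sq_abs x]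
          exact pow_le_pow_left₀ (abs_nonneg x) hxabs 2
  have htri : |(lam₃ - lam₂) * ((lam₃ - lamMinus)/lam₃)
      + p * (lam₂ - lam₁) * ((lamMinus - lam₂)/lam₂)
      - lamMinus * r| ≤
      |(lam₃ - lam₂) * ((lam₃ - lamMinus)/lam₃)|
      + |p * (lam₂ - lam₁) * ((lamMinus - lam₂)/lam₂)|
      + |lamMinus * r| := by
    calc _ ≤ |(lam₃ - lam₂) * ((lam₃ - lamMinus)/lam₃)
        + p * (lam₂ - lam₁) * ((lamMinus - lam₂)/lam₂)| + |lamMinus * r| := abs_sub _ _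
      _ ≤ _ := by
        have := abs_add_le ((lam₃ - lam₂) * ((lam₃ - lamMinus)/lam₃))
          (p * (lam₂ - lam₁) * ((lamMinus - lam₂)/lam₂))
        linarith
  have hε2 : ε * ε = (N:ℝ) ^ (-(4:ℝ)/3) := by
    rw [hεdef, ← Real.rpow_add hNpos]
    norm_num
  calc |(lam₃ - lam₂) * ((lam₃ - lamMinus)/lam₃)
      + p * (lam₂ - lam₁) * ((lamMinus - lam₂)/lam₂)
      - lamMinus * r| ≤
      (2*R*ε) * (2*R*ε/lamMinus) + p * (2*R*ε) * (2*R*ε/lamMinus)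
      + lamMinus * (K * (4*R*ε/lamMinus)^2) := by linarith [htri, hT1, hT2, hT3]
    _ = ((4*R^2 + 4*p*R^2 + 16*K*R^2)/lamMinus) * (ε * ε) := by field_simp; ring
    _ ≤ C * (ε * ε) := by
        refine mul_le_mul_of_nonneg_right ?_ (by positivity)
        rw [hCdef]; linarith
    _ = C * (N:ℝ) ^ (-(4:ℝ)/3) := by rw [hε2]
end

section
/- Let 0 < σ < 1/3, 0 < s < σ/40 and 0 < c < 10/σ. There exists N₀ ∈ ℕ such that for all N ≥ N₀ and every eigen-data configuration of size N satisfying Condition R(N,s), the number of indices n with 2 ≤ n ≤ N and δ_n > δ₂^{1+c} is at most N^{2s}. -/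
open Finset MeasureTheory
open scoped Classical

noncomputable section

/-- The Marchenko–Pastur density `ρ_d`. -/
def mpDensity (d x : ℝ) : ℝ :=
  if 0 < x then
    (1 / (2 * Real.pi * d)) *
      Real.sqrt (max (((1 + Real.sqrt d) ^ 2 - x) * (x - (1 - Real.sqrt d) ^ 2)) 0) / x
  else 0

/-- The quantile `γ_n`: the smallest `t` with `∫_{(-∞,t]} ρ_d = n/N`. -/
def mpQuantile (d : ℝ) (N n : ℕ) : ℝ :=
  sInf {t : ℝ | (∫ x in Set.Iic t, mpDensity d x) = (n : ℝ) / N}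

/-- An eigen-data configuration of size `N`: eigenvalues `0 < λ₁ ≤ ⋯ ≤ λ_N` and
nonnegative weights `β₁, …, β_N` with `β₁ > 0` and `∑ β_n² = 1`. -/
structure EigenData (N : ℕ) where
  lam : ℕ → ℝ
  beta : ℕ → ℝ
  lam_pos : 0 < lam 1
  lam_mono : ∀ m n, 1 ≤ m → m ≤ n → n ≤ N → lam m ≤ lam n
  beta_nonneg : ∀ n, 1 ≤ n → n ≤ N → 0 ≤ beta n
  beta_one_pos : 0 < beta 1
  beta_norm : ∑ n ∈ Finset.Icc 1 N, (beta n) ^ 2 = 1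

namespace EigenData

variable {N : ℕ}

/-- `δ_n = λ₁²/λ_n²`. -/
def δ (E : EigenData N) (n : ℕ) : ℝ := E.lam 1 ^ 2 / E.lam n ^ 2

/-- `Δ_n = λ_n - λ₁`. -/
def Δ (E : EigenData N) (n : ℕ) : ℝ := E.lam n - E.lam 1

/-- `ν_n = β_n²/β₁²`. -/
def ν (E : EigenData N) (n : ℕ) : ℝ := E.beta n ^ 2 / E.beta 1 ^ 2

/-- Condition R(N,s): delocalization, edge gaps and rigidity. -/
def CondR (d s : ℝ) (E : EigenData N) : Prop :=
  (∀ n ∈ Finset.Icc 1 N, E.beta n ≤ (N : ℝ) ^ (-1 / 2 + s / 2 : ℝ)) ∧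
  (∀ n ∈ ({1, 2, N - 1, N} : Set ℕ), (N : ℝ) ^ (-1 / 2 - s / 2 : ℝ) ≤ E.beta n) ∧
  (∀ n ∈ ({N - 1, N - 2} : Set ℕ),
    (N : ℝ) ^ (-2 / 3 - s / 2 : ℝ) ≤ E.lam N - E.lam n ∧
      E.lam N - E.lam n ≤ (N : ℝ) ^ (-2 / 3 + s / 2 : ℝ)) ∧
  (∀ n ∈ ({2, 3} : Set ℕ),
    (N : ℝ) ^ (-2 / 3 - s / 2 : ℝ) ≤ E.lam n - E.lam 1 ∧
      E.lam n - E.lam 1 ≤ (N : ℝ) ^ (-2 / 3 + s / 2 : ℝ)) ∧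
  (∀ n ∈ Finset.Icc 1 N, |E.lam n - mpQuantile d N n| ≤
    (N : ℝ) ^ (-2 / 3 + s / 2 : ℝ) * ((min n (N - n + 1) : ℕ) : ℝ) ^ (-1 / 3 : ℝ))

/-- Condition L(N,p): `λ₂/λ₃ < (λ₁/λ₂)^p`. -/
def CondL (p : ℝ) (E : EigenData N) : Prop :=
  E.lam 2 / E.lam 3 < (E.lam 1 / E.lam 2) ^ p

/-- The QR error function `E_QR(t)`. -/
def EQR (E : EigenData N) (t : ℝ) : ℝ :=
  (∑ n ∈ Finset.Icc 1 N, E.lam n ^ 2 * E.δ n ^ t * E.ν n) /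
      (∑ n ∈ Finset.Icc 1 N, E.δ n ^ t * E.ν n) -
    (∑ n ∈ Finset.Icc 1 N, E.lam n * E.δ n ^ t * E.ν n) ^ 2 /
      (∑ n ∈ Finset.Icc 1 N, E.δ n ^ t * E.ν n) ^ 2

/-- The QR halting time `T_{QR,ε} = inf {t ≥ 0 : E_QR(t) ≤ ε²}`. -/
def TQR (E : EigenData N) (ε : ℝ) : ℝ :=
  sInf {t : ℝ | 0 ≤ t ∧ E.EQR t ≤ ε ^ 2}

/-- The approximate QR halting time `T*_{QR,ε}` with `ε = N^{-α/2}`. -/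
def TstarQR (E : EigenData N) (α : ℝ) : ℝ :=
  (α * Real.log N + 2 * Real.log (E.Δ 2) + Real.log (E.ν 2)) / Real.log (E.δ 2)⁻¹

/-- The inverse power method iterate `λ_IP(t)`. -/
def lamIP (E : EigenData N) (t : ℝ) : ℝ :=
  (∑ n ∈ Finset.Icc 1 N, E.lam n ^ (-2 * t : ℝ) * E.beta n ^ 2) /
    (∑ n ∈ Finset.Icc 1 N, E.lam n ^ (-2 * t - 1 : ℝ) * E.beta n ^ 2)

/-- The inverse power method error `E_IP(t) = λ_IP(t+1)⁻¹ - λ_IP(t)⁻¹`. -/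
def EIP (E : EigenData N) (t : ℝ) : ℝ := (E.lamIP (t + 1))⁻¹ - (E.lamIP t)⁻¹

/-- The inverse power method halting time `T_{IP,ε} = inf {t ≥ 0 : E_IP(t) ≤ ε²}`. -/
def TIP (E : EigenData N) (ε : ℝ) : ℝ :=
  sInf {t : ℝ | 0 ≤ t ∧ E.EIP t ≤ ε ^ 2}

/-- The leading part `E_{IP,0}(t)` of the inverse power method error. -/
def EIP0 (E : EigenData N) (t : ℝ) : ℝ :=
  (∑ n ∈ Finset.Icc 2 N, (1 - E.δ n) * ((E.lam 1)⁻¹ - (E.lam n)⁻¹) * E.δ n ^ t * E.ν n) /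
    ((∑ n ∈ Finset.Icc 1 N, E.δ n ^ t * E.ν n) *
      (∑ n ∈ Finset.Icc 1 N, E.δ n ^ (t + 1) * E.ν n))

/-- The remainder `E_{IP,1}(t) = E_IP(t) - E_{IP,0}(t)`. -/
def EIP1 (E : EigenData N) (t : ℝ) : ℝ := E.EIP t - E.EIP0 t

/-- The approximate inverse power halting time `T*_{IP,ε}` with `ε = N^{-α/2}`. -/
def TstarIP (E : EigenData N) (α : ℝ) : ℝ :=
  (α * Real.log N + 2 * Real.log (1 - E.δ 2 ^ ((1 : ℝ) / 2)) +
      Real.log ((E.lam 2)⁻¹ + (E.lam 1)⁻¹) + Real.log (E.ν 2)) / Real.log (E.δ 2)⁻¹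

end EigenData

end
section MPHelpers

variable {d : ℝ}

lemma mpL_pos (hd0 : 0 < d) (hd1 : d < 1) : 0 < (1 - Real.sqrt d)^2 := by
  have h1 : Real.sqrt d < 1 := by
    nlinarith [Real.sq_sqrt hd0.le, Real.sqrt_nonneg d]
  nlinarith

lemma mpL_lt_mpP (hd0 : 0 < d) : (1 - Real.sqrt d)^2 < (1 + Real.sqrt d)^2 := by
  have := Real.sqrt_pos.mpr hd0
  nlinarith

lemma mpDensity_nonneg (hd0 : 0 < d) (x : ℝ) : 0 ≤ mpDensity d x := by
  unfold mpDensity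
  split
  · have := Real.pi_pos
    positivity
  · exact le_refl 0

lemma mpDensity_eq_zero_of_le (hd0 : 0 < d) (hd1 : d < 1) {x : ℝ}
    (hx : x ≤ (1 - Real.sqrt d)^2) : mpDensity d x = 0 := by
  unfold mpDensity
  split
  · have hP : x < (1 + Real.sqrt d)^2 := lt_of_le_of_lt hx (mpL_lt_mpP hd0)
    have : max (((1 + Real.sqrt d) ^ 2 - x) * (x - (1 - Real.sqrt d) ^ 2)) 0 = 0 := by
      rw [max_eq_right]
      exact mul_nonpos_of_nonneg_of_nonpos (by linarith) (by linarith)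
    rw [this, Real.sqrt_zero, mul_zero, zero_div]
  · rfl

lemma mpDensity_eq_zero_of_ge (hd0 : 0 < d) {x : ℝ}
    (hx : (1 + Real.sqrt d)^2 ≤ x) : mpDensity d x = 0 := by
  unfold mpDensity
  split
  · have hL : (1 - Real.sqrt d)^2 < (1 + Real.sqrt d)^2 := mpL_lt_mpP hd0
    have : max (((1 + Real.sqrt d) ^ 2 - x) * (x - (1 - Real.sqrt d) ^ 2)) 0 = 0 := by
      rw [max_eq_right]
      exact mul_nonpos_of_nonpos_of_nonneg (by linarith) (by linarith)
    rw [this, Real.sqrt_zero, mul_zero, zero_div]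
  · rfl

lemma mpDensity_le (hd0 : 0 < d) (hd1 : d < 1) (x : ℝ) :
    mpDensity d x ≤ (1 / (2 * Real.pi * d)) * Real.sqrt (16 * d) / (1 - Real.sqrt d)^2 := by
  have hpi := Real.pi_pos
  have hL := mpL_pos hd0 hd1
  have hC : (0:ℝ) ≤ (1 / (2 * Real.pi * d)) * Real.sqrt (16 * d) / (1 - Real.sqrt d)^2 := by
    positivity
  rcases le_or_gt x ((1 - Real.sqrt d)^2) with h | h
  · rw [mpDensity_eq_zero_of_le hd0 hd1 h]; exact hC
  rcases le_or_gt ((1 + Real.sqrt d)^2) x with h' | h'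
  · rw [mpDensity_eq_zero_of_ge hd0 h']; exact hC
  have hx0 : 0 < x := lt_trans hL h
  unfold mpDensity
  rw [if_pos hx0]
  have hs : Real.sqrt d ≤ 1 := by
    nlinarith [Real.sq_sqrt hd0.le, Real.sqrt_nonneg d]
  have hs0 := Real.sqrt_nonneg d
  have hmax : max (((1 + Real.sqrt d) ^ 2 - x) * (x - (1 - Real.sqrt d) ^ 2)) 0 ≤ 16 * d := by
    have hd2 : Real.sqrt d ^ 2 = d := Real.sq_sqrt hd0.le
    have h1 : (1 + Real.sqrt d) ^ 2 - x ≤ 4 * Real.sqrt d := by nlinarith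
    have h2 : x - (1 - Real.sqrt d) ^ 2 ≤ 4 * Real.sqrt d := by nlinarith
    have h3 : (0:ℝ) ≤ x - (1 - Real.sqrt d) ^ 2 := by linarith
    have : ((1 + Real.sqrt d) ^ 2 - x) * (x - (1 - Real.sqrt d) ^ 2) ≤ 16 * d := by
      nlinarith
    exact max_le this (by positivity)
  have hsq : Real.sqrt (max (((1 + Real.sqrt d) ^ 2 - x) * (x - (1 - Real.sqrt d) ^ 2)) 0)
      ≤ Real.sqrt (16 * d) := Real.sqrt_le_sqrt hmax
  have hCpos : (0:ℝ) < 1 / (2 * Real.pi * d) := by positivity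
  have hxL : (1 - Real.sqrt d)^2 ≤ x := h.le
  gcongr


lemma mpDensity_measurable (d : ℝ) : Measurable (mpDensity d) := by
  unfold mpDensity
  apply Measurable.ite measurableSet_Ioi <;> fun_prop

lemma mpDensity_integrable (hd0 : 0 < d) (hd1 : d < 1) : Integrable (mpDensity d) := by
  set C := (1 / (2 * Real.pi * d)) * Real.sqrt (16 * d) / (1 - Real.sqrt d)^2 with hC
  have hInd : Integrable ((Set.Icc ((1 - Real.sqrt d)^2) ((1 + Real.sqrt d)^2)).indicator
      (fun _ => C)) := by
    rw [integrable_indicator_iff measurableSet_Icc]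
    exact integrableOn_const measure_Icc_lt_top.ne
  refine hInd.mono' (mpDensity_measurable d).aestronglyMeasurable ?_
  filter_upwards with x
  rw [Real.norm_eq_abs, abs_of_nonneg (mpDensity_nonneg hd0 x)]
  by_cases hx : x ∈ Set.Icc ((1 - Real.sqrt d)^2) ((1 + Real.sqrt d)^2)
  · rw [Set.indicator_of_mem hx]; exact mpDensity_le hd0 hd1 x
  · rw [Set.indicator_of_notMem hx]
    rcases not_and_or.mp hx with h | h
    · rw [mpDensity_eq_zero_of_le hd0 hd1 (le_of_not_ge h)]
    · rw [mpDensity_eq_zero_of_ge hd0 (le_of_not_ge h)]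

/-- The CDF of the MP law. -/
noncomputable def mpF (d t : ℝ) : ℝ := ∫ x in Set.Iic t, mpDensity d x

lemma mpF_nonneg (hd0 : 0 < d) (t : ℝ) : 0 ≤ mpF d t :=
  setIntegral_nonneg measurableSet_Iic (fun x _ => mpDensity_nonneg hd0 x)

lemma mpF_split (hd0 : 0 < d) (hd1 : d < 1) {a b : ℝ} (hab : a ≤ b) :
    mpF d b = mpF d a + ∫ x in Set.Ioc a b, mpDensity d x := by
  have h := mpDensity_integrable hd0 hd1
  rw [mpF, mpF, ← Set.Iic_union_Ioc_eq_Iic hab,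
    setIntegral_union (Set.Iic_disjoint_Ioc le_rfl) measurableSet_Ioc
      h.integrableOn h.integrableOn]

lemma mpF_mono (hd0 : 0 < d) (hd1 : d < 1) {a b : ℝ} (hab : a ≤ b) : mpF d a ≤ mpF d b := by
  rw [mpF_split hd0 hd1 hab]
  have : 0 ≤ ∫ x in Set.Ioc a b, mpDensity d x :=
    setIntegral_nonneg measurableSet_Ioc (fun x _ => mpDensity_nonneg hd0 x)
  linarith

lemma mpF_eq_zero (hd0 : 0 < d) (hd1 : d < 1) {t : ℝ} (ht : t ≤ (1 - Real.sqrt d)^2) :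
    mpF d t = 0 := by
  rw [mpF]
  rw [setIntegral_congr_fun measurableSet_Iic
    (fun x hx => mpDensity_eq_zero_of_le hd0 hd1 (le_trans hx ht))]
  exact integral_zero _ _

lemma mpF_continuous (hd0 : 0 < d) (hd1 : d < 1) : Continuous (mpF d) := by
  set C := (1 / (2 * Real.pi * d)) * Real.sqrt (16 * d) / (1 - Real.sqrt d)^2 with hCdef
  have hC0 : 0 ≤ C := le_trans (mpDensity_nonneg hd0 0) (mpDensity_le hd0 hd1 0)
  have key : ∀ a b : ℝ, a ≤ b → mpF d b - mpF d a ≤ C * (b - a) := by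
    intro a b hab
    rw [mpF_split hd0 hd1 hab]
    have h1 : ∫ x in Set.Ioc a b, mpDensity d x ≤ ∫ _x in Set.Ioc a b, C := by
      refine setIntegral_mono_on ((mpDensity_integrable hd0 hd1).integrableOn)
        (integrableOn_const measure_Ioc_lt_top.ne) measurableSet_Ioc ?_
      exact fun x _ => mpDensity_le hd0 hd1 x
    have h2 : ∫ _x in Set.Ioc a b, C = (b - a) * C := by
      rw [setIntegral_const, measureReal_def, Real.volume_Ioc, smul_eq_mul,
        ENNReal.toReal_ofReal (by linarith)]
    nlinarith [h1, h2]
  apply LipschitzWith.continuous (K := Real.toNNReal C)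
  apply LipschitzWith.of_dist_le_mul
  intro a b
  rw [Real.dist_eq, Real.dist_eq, Real.coe_toNNReal _ hC0]
  rcases le_total a b with h | h
  · rw [abs_of_nonpos (by linarith [mpF_mono hd0 hd1 h]), abs_of_nonpos (by linarith)]
    have := key a b h
    linarith
  · rw [abs_of_nonneg (by linarith [mpF_mono hd0 hd1 h]), abs_of_nonneg (by linarith)]
    have := key b a h
    linarith

noncomputable def mpc1' (d : ℝ) : ℝ :=
  (1 / (2 * Real.pi * d)) * Real.sqrt (Real.sqrt d) / (1 + Real.sqrt d)^2 / 2

noncomputable def mpc2' (d : ℝ) : ℝ :=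
  (1 / (2 * Real.pi * d)) * (2 * Real.sqrt (Real.sqrt d)) / (1 - Real.sqrt d)^2

lemma mpc1'_pos (hd0 : 0 < d) (hd1 : d < 1) : 0 < mpc1' d := by
  have := Real.pi_pos
  have h2 : 0 < Real.sqrt d := Real.sqrt_pos.mpr hd0
  have h3 : 0 < Real.sqrt (Real.sqrt d) := Real.sqrt_pos.mpr h2
  have h4 : (0:ℝ) < (1 + Real.sqrt d)^2 := by positivity
  unfold mpc1'
  positivity

lemma mpc2'_pos (hd0 : 0 < d) (hd1 : d < 1) : 0 < mpc2' d := by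
  have := Real.pi_pos
  have h2 : 0 < Real.sqrt d := Real.sqrt_pos.mpr hd0
  have h3 : 0 < Real.sqrt (Real.sqrt d) := Real.sqrt_pos.mpr h2
  have h4 := mpL_pos hd0 hd1
  unfold mpc2'
  positivity

lemma mpF_lb (hd0 : 0 < d) (hd1 : d < 1) {u : ℝ} (hu : 0 < u) (hu2 : u ≤ 2 * Real.sqrt d) :
    mpc1' d * (u * Real.sqrt u) ≤ mpF d ((1 - Real.sqrt d)^2 + u) := by
  have hpi := Real.pi_pos
  set L := (1 - Real.sqrt d)^2 with hLdef
  set P := (1 + Real.sqrt d)^2 with hPdef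
  have hL : 0 < L := mpL_pos hd0 hd1
  have hs : 0 < Real.sqrt d := Real.sqrt_pos.mpr hd0
  have hPL : P - L = 4 * Real.sqrt d := by rw [hLdef, hPdef]; ring
  set b := (1 / (2 * Real.pi * d)) * Real.sqrt (Real.sqrt d * u) / P with hbdef
  have hb0 : 0 ≤ b := by rw [hbdef, hPdef]; positivity
  have hpt : ∀ x ∈ Set.Ioc (L + u/2) (L + u), b ≤ mpDensity d x := by
    intro x hx
    obtain ⟨hx1, hx2⟩ := hx
    have hx0 : 0 < x := by linarith
    have hxP : x ≤ P := by
      linarith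
    unfold mpDensity
    rw [if_pos hx0]
    have hprod : Real.sqrt d * u ≤ (P - x) * (x - L) := by
      have h1 : 2 * Real.sqrt d ≤ P - x := by linarith
      have h2 : u / 2 ≤ x - L := by linarith
      nlinarith
    have hmax : Real.sqrt d * u ≤ max ((P - x) * (x - L)) 0 :=
      le_trans hprod (le_max_left _ _)
    have hsq : Real.sqrt (Real.sqrt d * u) ≤ Real.sqrt (max ((P - x) * (x - L)) 0) :=
      Real.sqrt_le_sqrt hmax
    have hdiv : Real.sqrt (Real.sqrt d * u) / P ≤
        Real.sqrt (max ((P - x) * (x - L)) 0) / x :=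
      div_le_div₀ (Real.sqrt_nonneg _) hsq hx0 hxP
    have hC : (0:ℝ) < 1 / (2 * Real.pi * d) := by positivity
    rw [hbdef]
    calc 1 / (2 * Real.pi * d) * Real.sqrt (Real.sqrt d * u) / P
        = 1 / (2 * Real.pi * d) * (Real.sqrt (Real.sqrt d * u) / P) := by ring
      _ ≤ 1 / (2 * Real.pi * d) * (Real.sqrt (max ((P - x) * (x - L)) 0) / x) :=
          mul_le_mul_of_nonneg_left hdiv hC.le
      _ = 1 / (2 * Real.pi * d) * Real.sqrt (max ((P - x) * (x - L)) 0) / x := by ring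
  have hint : (u/2) * b ≤ ∫ x in Set.Ioc (L + u/2) (L + u), mpDensity d x := by
    have h1 : ∫ _x in Set.Ioc (L + u/2) (L + u), b ≤
        ∫ x in Set.Ioc (L + u/2) (L + u), mpDensity d x :=
      setIntegral_mono_on (integrableOn_const measure_Ioc_lt_top.ne)
        ((mpDensity_integrable hd0 hd1).integrableOn) measurableSet_Ioc hpt
    have h2 : ∫ _x in Set.Ioc (L + u/2) (L + u), b = (u/2) * b := by
      rw [setIntegral_const, measureReal_def, Real.volume_Ioc, smul_eq_mul,
        ENNReal.toReal_ofReal (by linarith)]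
      ring_nf
    linarith
  have hsplit := mpF_split hd0 hd1 (show L + u/2 ≤ L + u by linarith)
  have hF0 := mpF_nonneg hd0 (t := L + u/2)
  have hfinal : (u/2) * b ≤ mpF d (L + u) := by rw [hsplit]; linarith
  refine le_trans (le_of_eq ?_) hfinal
  rw [hbdef, Real.sqrt_mul hs.le u]
  unfold mpc1'
  rw [← hPdef]
  ring

lemma mpF_ub (hd0 : 0 < d) (hd1 : d < 1) {u : ℝ} (hu : 0 ≤ u) :
    mpF d ((1 - Real.sqrt d)^2 + u) ≤ mpc2' d * (u * Real.sqrt u) := by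
  have hpi := Real.pi_pos
  set L := (1 - Real.sqrt d)^2 with hLdef
  set P := (1 + Real.sqrt d)^2 with hPdef
  have hL : 0 < L := mpL_pos hd0 hd1
  have hs : 0 < Real.sqrt d := Real.sqrt_pos.mpr hd0
  have hPL : P - L = 4 * Real.sqrt d := by rw [hLdef, hPdef]; ring
  set b := (1 / (2 * Real.pi * d)) * (2 * Real.sqrt (Real.sqrt d * u)) / L with hbdef
  have hb0 : 0 ≤ b := by rw [hbdef]; positivity
  have hsqrt4 : Real.sqrt (4 * (Real.sqrt d * u)) = 2 * Real.sqrt (Real.sqrt d * u) := by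
    rw [show (4:ℝ) * (Real.sqrt d * u) = 2^2 * (Real.sqrt d * u) by ring,
      Real.sqrt_mul (by positivity), Real.sqrt_sq (by norm_num)]
  have hpt : ∀ x ∈ Set.Ioc L (L + u), mpDensity d x ≤ b := by
    intro x hx
    obtain ⟨hx1, hx2⟩ := hx
    rcases le_or_gt P x with hP | hP
    · rw [mpDensity_eq_zero_of_ge hd0 hP]; exact hb0
    have hx0 : 0 < x := lt_trans hL hx1
    unfold mpDensity
    rw [if_pos hx0]
    have hprod : (P - x) * (x - L) ≤ 4 * (Real.sqrt d * u) := by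
      have h1 : P - x ≤ 4 * Real.sqrt d := by rw [← hPL]; linarith
      have h2 : x - L ≤ u := by linarith
      nlinarith
    have hmax : max ((P - x) * (x - L)) 0 ≤ 4 * (Real.sqrt d * u) :=
      max_le hprod (by positivity)
    have hsq : Real.sqrt (max ((P - x) * (x - L)) 0) ≤ 2 * Real.sqrt (Real.sqrt d * u) := by
      rw [← hsqrt4]; exact Real.sqrt_le_sqrt hmax
    have hdiv : Real.sqrt (max ((P - x) * (x - L)) 0) / x ≤
        2 * Real.sqrt (Real.sqrt d * u) / L :=
      div_le_div₀ (by positivity) hsq hL hx1.le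
    have hC : (0:ℝ) < 1 / (2 * Real.pi * d) := by positivity
    rw [hbdef]
    calc 1 / (2 * Real.pi * d) * Real.sqrt (max ((P - x) * (x - L)) 0) / x
        = 1 / (2 * Real.pi * d) * (Real.sqrt (max ((P - x) * (x - L)) 0) / x) := by ring
      _ ≤ 1 / (2 * Real.pi * d) * (2 * Real.sqrt (Real.sqrt d * u) / L) :=
          mul_le_mul_of_nonneg_left hdiv hC.le
      _ = 1 / (2 * Real.pi * d) * (2 * Real.sqrt (Real.sqrt d * u)) / L := by ring
  have hint : ∫ x in Set.Ioc L (L + u), mpDensity d x ≤ u * b := by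
    have h1 : ∫ x in Set.Ioc L (L + u), mpDensity d x ≤ ∫ _x in Set.Ioc L (L + u), b :=
      setIntegral_mono_on ((mpDensity_integrable hd0 hd1).integrableOn)
        (integrableOn_const measure_Ioc_lt_top.ne) measurableSet_Ioc hpt
    have h2 : ∫ _x in Set.Ioc L (L + u), b = u * b := by
      rw [setIntegral_const, measureReal_def, Real.volume_Ioc, smul_eq_mul,
        ENNReal.toReal_ofReal (by linarith)]
      ring_nf
    linarith
  have hsplit := mpF_split hd0 hd1 (show L ≤ L + u by linarith)
  have hFL : mpF d L = 0 := mpF_eq_zero hd0 hd1 le_rfl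
  have : mpF d (L + u) ≤ u * b := by rw [hsplit, hFL]; linarith
  refine le_trans this (le_of_eq ?_)
  rw [hbdef, Real.sqrt_mul hs.le u]
  unfold mpc2'
  rw [← hLdef]
  ring

lemma mpQuantile_eq (d : ℝ) (N n : ℕ) :
    mpQuantile d N n = sInf {t : ℝ | mpF d t = (n : ℝ) / N} := rfl

lemma quantile_subset (hd0 : 0 < d) (hd1 : d < 1) {N n : ℕ} (hn : 1 ≤ n) (hN : 1 ≤ N) :
    ∀ t ∈ {t : ℝ | mpF d t = (n : ℝ) / N}, (1 - Real.sqrt d)^2 ≤ t := by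
  intro t ht
  by_contra h
  push_neg at h
  have h0 : mpF d t = 0 := mpF_eq_zero hd0 hd1 h.le
  have hpos : (0:ℝ) < (n : ℝ) / N := by
    have : (0:ℝ) < (n:ℝ) := by exact_mod_cast hn
    have : (0:ℝ) < (N:ℝ) := by exact_mod_cast hN
    positivity
  rw [Set.mem_setOf_eq, h0] at ht
  linarith

lemma quantile_spec (hd0 : 0 < d) (hd1 : d < 1) {N n : ℕ} (hn : 1 ≤ n) (hN : 1 ≤ N)
    (hS : {t : ℝ | mpF d t = (n : ℝ) / N}.Nonempty) :
    mpF d (mpQuantile d N n) = (n : ℝ) / N ∧ (1 - Real.sqrt d)^2 ≤ mpQuantile d N n := by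
  have hbdd : BddBelow {t : ℝ | mpF d t = (n : ℝ) / N} :=
    ⟨(1 - Real.sqrt d)^2, quantile_subset hd0 hd1 hn hN⟩
  have hclosed : IsClosed {t : ℝ | mpF d t = (n : ℝ) / N} := by
    have : {t : ℝ | mpF d t = (n : ℝ) / N} = mpF d ⁻¹' {((n : ℝ) / N)} := rfl
    rw [this]
    exact isClosed_singleton.preimage (mpF_continuous hd0 hd1)
  have hmem := hclosed.csInf_mem hS hbdd
  rw [mpQuantile_eq]
  exact ⟨hmem, quantile_subset hd0 hd1 hn hN _ hmem⟩

lemma quantile_one (hd0 : 0 < d) (hd1 : d < 1) {N : ℕ} (hN : 1 ≤ N) {u : ℝ}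
    (hu : 0 < u) (hu2 : u ≤ 2 * Real.sqrt d)
    (h1N : (1:ℝ) / N ≤ mpc1' d * (u * Real.sqrt u)) :
    {t : ℝ | mpF d t = ((1:ℕ) : ℝ) / N}.Nonempty ∧
      mpQuantile d N 1 ≤ (1 - Real.sqrt d)^2 + u := by
  set L := (1 - Real.sqrt d)^2 with hLdef
  have hIVT := intermediate_value_Icc (show L ≤ L + u by linarith)
    (mpF_continuous hd0 hd1).continuousOn
  have hmemIcc : (1:ℝ)/N ∈ Set.Icc (mpF d L) (mpF d (L + u)) := by
    constructor
    · rw [mpF_eq_zero hd0 hd1 le_rfl]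
      positivity
    · exact le_trans h1N (mpF_lb hd0 hd1 hu hu2)
  obtain ⟨t, ht, hFt⟩ := hIVT hmemIcc
  have hFt' : mpF d t = ((1:ℕ) : ℝ) / N := by rw [hFt]; norm_num
  have hS : {t : ℝ | mpF d t = ((1:ℕ) : ℝ) / N}.Nonempty := ⟨t, hFt'⟩
  refine ⟨hS, ?_⟩
  rw [mpQuantile_eq]
  exact le_trans (csInf_le ⟨L, quantile_subset hd0 hd1 le_rfl hN⟩ hFt') ht.2

lemma mul_sqrt_eq_rpow {u : ℝ} (hu : 0 ≤ u) : u * Real.sqrt u = u ^ ((3:ℝ)/2) := by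
  rcases eq_or_lt_of_le hu with h | h
  · rw [← h, Real.sqrt_zero, mul_zero, Real.zero_rpow (by norm_num)]
  · rw [Real.sqrt_eq_rpow]
    nth_rewrite 1 [← Real.rpow_one u]
    rw [← Real.rpow_add h]
    norm_num

lemma cube_root_bound {c2 r u : ℝ} (hc2 : 0 < c2) (hr : 0 < r) (hu : 0 ≤ u)
    (h : r ≤ c2 * (u * Real.sqrt u)) : (r / c2) ^ ((2:ℝ)/3) ≤ u := by
  set w := (r / c2) ^ ((2:ℝ)/3) with hwdef
  have hrc : 0 < r / c2 := by positivity
  have hw : 0 < w := Real.rpow_pos_of_pos hrc _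
  by_contra hlt
  push_neg at hlt
  have hww : w * Real.sqrt w = r / c2 := by
    rw [mul_sqrt_eq_rpow hw.le, hwdef, ← Real.rpow_mul hrc.le]
    norm_num
  have hlt2 : u * Real.sqrt u < w * Real.sqrt w := by
    have hsu : Real.sqrt u ≤ Real.sqrt w := Real.sqrt_le_sqrt hlt.le
    have hsw : 0 < Real.sqrt w := Real.sqrt_pos.mpr hw
    calc u * Real.sqrt u ≤ u * Real.sqrt w := mul_le_mul_of_nonneg_left hsu hu
      _ < w * Real.sqrt w := by exact mul_lt_mul_of_pos_right hlt hsw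
  rw [hww] at hlt2
  have : r < r := by
    calc r ≤ c2 * (u * Real.sqrt u) := h
      _ < c2 * (r / c2) := by exact mul_lt_mul_of_pos_left hlt2 hc2
      _ = r := by field_simp
  exact lt_irrefl r this

lemma exp_le_one_add_two_mul {y : ℝ} (hy0 : 0 ≤ y) (hy : y ≤ 1/2) :
    Real.exp y ≤ 1 + 2 * y := by
  have h2 : 0 < 1 - y := by linarith
  have h1 : 1 - y ≤ Real.exp (-y) := by linarith [Real.add_one_le_exp (-y)]
  have hinv : Real.exp y = (Real.exp (-y))⁻¹ := by
    rw [Real.exp_neg, inv_inv]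
  have h3 : (Real.exp (-y))⁻¹ ≤ (1 - y)⁻¹ := by
    apply inv_anti₀ h2 h1
  have h4 : (1 - y)⁻¹ ≤ 1 + 2 * y := by
    rw [inv_le_iff_one_le_mul₀ h2]
    nlinarith
  rw [hinv]; linarith

end MPHelpers

set_option maxHeartbeats 2000000 in
/-- Lemma on the cardinality of `I_c^c`: given Condition R(N,s), the number of indices
`2 ≤ n ≤ N` with `δ_n > δ₂^{1+c}` is at most `N^{2s}`. -/
theorem card_Ic_compl_le (d σ s c : ℝ)
    (hd0 : 0 < d) (hd1 : d < 1)
    (hσ0 : 0 < σ) (hσ1 : σ < 1 / 3)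
    (hs0 : 0 < s) (hs1 : s < σ / 40)
    (hc0 : 0 < c) (hc1 : c < 10 / σ) :
    ∃ N₀ : ℕ, ∀ N : ℕ, N₀ ≤ N → ∀ E : EigenData N, E.CondR d s →
      (((Finset.Icc 2 N).filter (fun n => E.δ 2 ^ (1 + c : ℝ) < E.δ n)).card : ℝ) ≤
        (N : ℝ) ^ (2 * s) := by
  have hs120 : s < 1 / 120 := by nlinarith
  have h2s1 : 2 * s ≤ 1 := by linarith
  have hL : 0 < (1 - Real.sqrt d)^2 := mpL_pos hd0 hd1
  set L := (1 - Real.sqrt d)^2 with hLdef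
  have hsd : 0 < Real.sqrt d := Real.sqrt_pos.mpr hd0
  have hc1p : 0 < mpc1' d := mpc1'_pos hd0 hd1
  have hc2p : 0 < mpc2' d := mpc2'_pos hd0 hd1
  set A := max 1 ((1 / mpc1' d) ^ ((2:ℝ)/3)) with hAdef
  have hA1 : (1:ℝ) ≤ A := le_max_left _ _
  have hA0 : (0:ℝ) < A := lt_of_lt_of_le one_pos hA1
  set K := (A + 3 + 4 * c) * (mpc2' d) ^ ((2:ℝ)/3) with hKdef
  have natT : Filter.Tendsto (fun n : ℕ => (n : ℝ)) Filter.atTop Filter.atTop :=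
    tendsto_natCast_atTop_atTop
  have t23 : Filter.Tendsto (fun x : ℝ => x ^ (-(2:ℝ)/3)) Filter.atTop (nhds 0) := by
    have h := tendsto_rpow_neg_atTop (y := (2:ℝ)/3) (by norm_num)
    simpa [neg_div] using h
  have te2 : Filter.Tendsto (fun x : ℝ => x ^ (-2 / 3 + s / 2 : ℝ)) Filter.atTop (nhds 0) := by
    have h := tendsto_rpow_neg_atTop (y := (2:ℝ)/3 - s/2) (by norm_num; linarith)
    have e : (-((2:ℝ)/3 - s/2)) = (-2 / 3 + s / 2 : ℝ) := by ring
    simpa [e] using h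
  have ev1 : ∀ᶠ N : ℕ in Filter.atTop, 2 ≤ N := Filter.eventually_ge_atTop 2
  have ev2 : ∀ᶠ N : ℕ in Filter.atTop, A * (N:ℝ) ^ (-(2:ℝ)/3) ≤ 2 * Real.sqrt d := by
    have h : Filter.Tendsto (fun N : ℕ => A * (N:ℝ) ^ (-(2:ℝ)/3)) Filter.atTop (nhds 0) := by
      have := (t23.const_mul A).comp natT
      simpa [Function.comp_def] using this
    exact (h.eventually_lt_const (by positivity)).mono fun _ h => h.le
  have ev3 : ∀ᶠ N : ℕ in Filter.atTop, 2 * (N:ℝ) ^ (-2 / 3 + s / 2 : ℝ) < L := by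
    have h : Filter.Tendsto (fun N : ℕ => 2 * (N:ℝ) ^ (-2 / 3 + s / 2 : ℝ))
        Filter.atTop (nhds 0) := by
      have := (te2.const_mul 2).comp natT
      simpa [Function.comp_def] using this
    exact h.eventually_lt_const hL
  have ev4 : ∀ᶠ N : ℕ in Filter.atTop, (N:ℝ) ^ (-2 / 3 + s / 2 : ℝ) ≤ L / (4 * c) := by
    exact ((te2.comp natT).eventually_lt_const (by positivity)).mono fun _ h => h.le
  have ev5 : ∀ᶠ N : ℕ in Filter.atTop, K ≤ (N:ℝ) ^ (5 * s / 6) :=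
    ((tendsto_rpow_atTop (by linarith : (0:ℝ) < 5 * s / 6)).comp natT).eventually_ge_atTop K
  obtain ⟨N₀, hN₀⟩ := Filter.eventually_atTop.mp ((((ev1.and ev2).and ev3).and ev4).and ev5)
  refine ⟨N₀, fun N hNN E hR => ?_⟩
  obtain ⟨⟨⟨⟨hN2, hC1⟩, hC2⟩, hC3⟩, hC5⟩ := hN₀ N hNN
  have hN1 : 1 ≤ N := by omega
  have ha0 : (0:ℝ) < N := by exact_mod_cast (by omega : 0 < N)
  have ha1 : (1:ℝ) ≤ N := by exact_mod_cast hN1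
  have haa : (1:ℝ) < N := by exact_mod_cast (by omega : 1 < N)
  obtain ⟨hdeloc, hblb, hgapN, hgap2, hrig⟩ := hR
  set B := (N:ℝ) ^ (-2 / 3 + s / 2 : ℝ) with hBdef
  have hB0 : 0 < B := Real.rpow_pos_of_pos ha0 _
  have hrig' : ∀ n, 1 ≤ n → n ≤ N → |E.lam n - mpQuantile d N n| ≤ B := by
    intro n h1 h2
    have h := hrig n (Finset.mem_Icc.mpr ⟨h1, h2⟩)
    have hmin1 : (1:ℝ) ≤ ((min n (N - n + 1) : ℕ) : ℝ) := by
      have : 1 ≤ min n (N - n + 1) := le_min h1 (Nat.le_add_left 1 _)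
      exact_mod_cast this
    have hle1 : ((min n (N - n + 1) : ℕ) : ℝ) ^ (-1 / 3 : ℝ) ≤ 1 :=
      Real.rpow_le_one_of_one_le_of_nonpos hmin1 (by norm_num)
    calc |E.lam n - mpQuantile d N n|
        ≤ B * ((min n (N - n + 1) : ℕ) : ℝ) ^ (-1 / 3 : ℝ) := h
      _ ≤ B * 1 := mul_le_mul_of_nonneg_left hle1 hB0.le
      _ = B := mul_one B
  have hg := hgap2 2 (Set.mem_insert _ _)
  set g := E.lam 2 - E.lam 1 with hgdef
  have hgpos : 0 < g := lt_of_lt_of_le (Real.rpow_pos_of_pos ha0 _) hg.1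
  have hgB : g ≤ B := hg.2
  set u0 := A * (N:ℝ) ^ (-(2:ℝ)/3) with hu0def
  have hu0pos : 0 < u0 := by
    have := Real.rpow_pos_of_pos ha0 (-(2:ℝ)/3)
    positivity
  have hu0val : (1:ℝ) / N ≤ mpc1' d * (u0 * Real.sqrt u0) := by
    have h1 : u0 * Real.sqrt u0 = u0 ^ ((3:ℝ)/2) := mul_sqrt_eq_rpow hu0pos.le
    have h2 : u0 ^ ((3:ℝ)/2) = A ^ ((3:ℝ)/2) * (N:ℝ)⁻¹ := by
      rw [hu0def, Real.mul_rpow hA0.le (Real.rpow_nonneg ha0.le _),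
        ← Real.rpow_mul ha0.le]
      norm_num [Real.rpow_neg_one]
    have h3 : (1:ℝ) / mpc1' d ≤ A ^ ((3:ℝ)/2) := by
      have hle : (1 / mpc1' d) ^ ((2:ℝ)/3) ≤ A := le_max_right _ _
      calc (1:ℝ) / mpc1' d = ((1 / mpc1' d) ^ ((2:ℝ)/3)) ^ ((3:ℝ)/2) := by
            rw [← Real.rpow_mul (by positivity)]; norm_num
        _ ≤ A ^ ((3:ℝ)/2) := Real.rpow_le_rpow (by positivity) hle (by norm_num)
    rw [h1, h2]
    calc (1:ℝ) / N = mpc1' d * ((1 / mpc1' d) * (N:ℝ)⁻¹) := by field_simp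
      _ ≤ mpc1' d * (A ^ ((3:ℝ)/2) * (N:ℝ)⁻¹) :=
          mul_le_mul_of_nonneg_left
            (mul_le_mul_of_nonneg_right h3 (by positivity)) hc1p.le
  obtain ⟨hS1, hq1ub⟩ := quantile_one hd0 hd1 hN1 hu0pos hC1 hu0val
  obtain ⟨hFq1, hq1lb⟩ := quantile_spec hd0 hd1 (le_refl 1) hN1 hS1
  have hrig1 := hrig' 1 le_rfl hN1
  have hl1ub : E.lam 1 ≤ L + u0 + B := by
    have h := (abs_le.mp hrig1).2
    rw [← hLdef] at hq1ub
    linarith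
  have hl1lb : L - B ≤ E.lam 1 := by
    have h := (abs_le.mp hrig1).1
    rw [← hLdef] at hq1lb
    linarith
  set m := ⌈(N:ℝ) ^ (2 * s)⌉₊ with hmdef
  have hm2 : 2 ≤ m := by
    have h1 : (1:ℝ) < (N:ℝ) ^ (2 * s) :=
      (Real.one_lt_rpow_iff_of_pos ha0).mpr (Or.inl ⟨haa, by linarith⟩)
    have h2 : 1 < m := Nat.lt_ceil.mpr (by exact_mod_cast h1)
    omega
  have hmN : m ≤ N := by
    apply Nat.ceil_le.mpr
    calc (N:ℝ) ^ (2 * s) ≤ (N:ℝ) ^ (1:ℝ) := Real.rpow_le_rpow_of_exponent_le ha1 h2s1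
      _ = N := Real.rpow_one _
  have hmlb : (N:ℝ) ^ (2 * s) ≤ m := Nat.le_ceil _
  have hmub : (m:ℝ) ≤ (N:ℝ) ^ (2 * s) + 1 :=
    (Nat.ceil_lt_add_one (Real.rpow_nonneg ha0.le _)).le
  have hm0 : (0:ℝ) < m := by exact_mod_cast (by omega : 0 < m)
  have hSm : {t : ℝ | mpF d t = (m:ℝ) / N}.Nonempty := by
    by_contra hempty
    have hq0 : mpQuantile d N m = 0 := by
      rw [mpQuantile_eq, Set.not_nonempty_iff_eq_empty.mp hempty, Real.sInf_empty]
    have hr := hrig' m (by omega) hmN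
    rw [hq0, sub_zero] at hr
    have hlam_m : E.lam m ≤ B := (abs_le.mp hr).2
    have hl1m : E.lam 1 ≤ E.lam m := E.lam_mono 1 m le_rfl (by omega) hmN
    linarith
  obtain ⟨hFqm, hqmlb⟩ := quantile_spec hd0 hd1 (n := m) (by omega) hN1 hSm
  rw [← hLdef] at hqmlb
  obtain ⟨u, hu0', hγeq⟩ : ∃ u, 0 ≤ u ∧ mpQuantile d N m = L + u :=
    ⟨mpQuantile d N m - L, by linarith, by ring⟩
  have hub : (m:ℝ) / N ≤ mpc2' d * (u * Real.sqrt u) := by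
    have he : mpF d (L + u) = (m:ℝ) / N := by rw [← hγeq]; exact hFqm
    have h2 := mpF_ub hd0 hd1 hu0'
    rw [← hLdef, he] at h2
    exact h2
  have hM : (((m:ℝ) / N) / mpc2' d) ^ ((2:ℝ)/3) ≤ u :=
    cube_root_bound hc2p (by positivity) hu0' hub
  have hMlb : A * (N:ℝ) ^ (-(2:ℝ)/3) + (3 + 4 * c) * B
      ≤ (((m:ℝ) / N) / mpc2' d) ^ ((2:ℝ)/3) := by
    have h0 : (N:ℝ) ^ (2 * s - 1) ≤ (m:ℝ) / N := by
      rw [Real.rpow_sub ha0, Real.rpow_one]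
      gcongr
      all_goals exact hmlb
    have hbase : (N:ℝ) ^ (2 * s - 1) / mpc2' d ≤ ((m:ℝ) / N) / mpc2' d := by gcongr
    have h1 : ((N:ℝ) ^ (2 * s - 1) / mpc2' d) ^ ((2:ℝ)/3)
        ≤ (((m:ℝ) / N) / mpc2' d) ^ ((2:ℝ)/3) :=
      Real.rpow_le_rpow (by positivity) hbase (by norm_num)
    have h2 : ((N:ℝ) ^ (2 * s - 1) / mpc2' d) ^ ((2:ℝ)/3)
        = (N:ℝ) ^ ((2 * s - 1) * ((2:ℝ)/3)) / (mpc2' d) ^ ((2:ℝ)/3) := by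
      rw [Real.div_rpow (Real.rpow_nonneg ha0.le _) hc2p.le, ← Real.rpow_mul ha0.le]
    have h3 : (N:ℝ) ^ ((2 * s - 1) * ((2:ℝ)/3))
        = (N:ℝ) ^ (-2 / 3 + s / 2 : ℝ) * (N:ℝ) ^ (5 * s / 6) := by
      rw [← Real.rpow_add ha0]
      ring_nf
    have h4 : A * (N:ℝ) ^ (-(2:ℝ)/3) ≤ A * B := by
      apply mul_le_mul_of_nonneg_left _ hA0.le
      exact Real.rpow_le_rpow_of_exponent_le ha1 (by linarith)
    have h6 : (A + 3 + 4 * c) * B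
        ≤ (N:ℝ) ^ (-2 / 3 + s / 2 : ℝ) * (N:ℝ) ^ (5 * s / 6) / (mpc2' d) ^ ((2:ℝ)/3) := by
      have hdiv : (A + 3 + 4 * c) ≤ (N:ℝ) ^ (5 * s / 6) / (mpc2' d) ^ ((2:ℝ)/3) := by
        rw [le_div_iff₀ (by positivity)]
        exact hC5
      calc (A + 3 + 4 * c) * B ≤ ((N:ℝ) ^ (5 * s / 6) / (mpc2' d) ^ ((2:ℝ)/3)) * B :=
            mul_le_mul_of_nonneg_right hdiv hB0.le
        _ = (N:ℝ) ^ (-2 / 3 + s / 2 : ℝ) * (N:ℝ) ^ (5 * s / 6) / (mpc2' d) ^ ((2:ℝ)/3) := by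
            rw [hBdef]; ring
    calc A * (N:ℝ) ^ (-(2:ℝ)/3) + (3 + 4 * c) * B ≤ (A + 3 + 4 * c) * B := by
          have : A * B + (3 + 4 * c) * B = (A + 3 + 4 * c) * B := by ring
          linarith
      _ ≤ (N:ℝ) ^ (-2 / 3 + s / 2 : ℝ) * (N:ℝ) ^ (5 * s / 6) / (mpc2' d) ^ ((2:ℝ)/3) := h6
      _ = (N:ℝ) ^ ((2 * s - 1) * ((2:ℝ)/3)) / (mpc2' d) ^ ((2:ℝ)/3) := by rw [h3]
      _ = ((N:ℝ) ^ (2 * s - 1) / mpc2' d) ^ ((2:ℝ)/3) := h2.symm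
      _ ≤ _ := h1
  -- lower bound on lam m
  have hrigm := hrig' m (by omega) hmN
  have hlm : E.lam 1 + (1 + 4 * c) * B ≤ E.lam m := by
    have h1 : mpQuantile d N m - B ≤ E.lam m := by
      have := (abs_le.mp hrigm).1
      linarith
    have h2 : L + (A * (N:ℝ) ^ (-(2:ℝ)/3) + (3 + 4 * c) * B) ≤ mpQuantile d N m := by
      have := le_trans hMlb hM
      rw [hγeq]
      linarith
    have hu0eq : u0 = A * (N:ℝ) ^ (-(2:ℝ)/3) := hu0def
    linarith [hl1ub]
  -- key pointwise bound
  have hkey : ∀ n, 2 ≤ n → n ≤ N → m ≤ n → ¬ (E.δ 2 ^ (1 + c : ℝ) < E.δ n) := by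
    intro n h2n hnN hmn
    apply not_lt.mpr
    have hlmn : E.lam m ≤ E.lam n := E.lam_mono m n (by omega) hmn hnN
    have hl1 : 0 < E.lam 1 := E.lam_pos
    have hl2 : 0 < E.lam 2 := by
      have : E.lam 2 - E.lam 1 = g := rfl
      linarith [hgpos]
    have hln : 0 < E.lam n := lt_of_lt_of_le hl1 (E.lam_mono 1 n le_rfl (by omega) hnN)
    have hl1big : L / 2 < E.lam 1 := by linarith
    have hgl : g = E.lam 2 - E.lam 1 := hgdef
    set y := c * g / E.lam 1 with hydef
    have hy0 : 0 ≤ y := by positivity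
    have hy12 : y ≤ 1 / 2 := by
      have h1 : c * g ≤ c * B := mul_le_mul_of_nonneg_left hgB hc0.le
      have h2 : c * B ≤ L / 4 := by
        calc c * B ≤ c * (L / (4 * c)) := mul_le_mul_of_nonneg_left hC3 hc0.le
          _ = L / 4 := by
              field_simp
              try ring
      have h3 : c * g / E.lam 1 ≤ (L / 4) / (L / 2) := by
        apply div_le_div₀ (by positivity) (le_trans h1 h2) (by positivity) hl1big.le
      have h4 : (L / 4) / (L / 2) = 1 / 2 := by
        rw [div_div_div_comm]
        rw [div_self hL.ne']
        norm_num
      rw [hydef]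
      linarith
    have hrpc : (E.lam 2 / E.lam 1) ^ (c : ℝ) ≤ 1 + 2 * y := by
      rw [Real.rpow_def_of_pos (by positivity)]
      have hlog : Real.log (E.lam 2 / E.lam 1) ≤ g / E.lam 1 := by
        have h := Real.log_le_sub_one_of_pos (x := E.lam 2 / E.lam 1) (by positivity)
        have : E.lam 2 / E.lam 1 - 1 = g / E.lam 1 := by
          field_simp [hgl]
          exact hgl.symm
        linarith
      have h1 : Real.log (E.lam 2 / E.lam 1) * c ≤ y := by
        rw [hydef]
        calc Real.log (E.lam 2 / E.lam 1) * c ≤ (g / E.lam 1) * c :=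
              mul_le_mul_of_nonneg_right hlog hc0.le
          _ = c * g / E.lam 1 := by ring
      calc Real.exp (Real.log (E.lam 2 / E.lam 1) * c) ≤ Real.exp y :=
            Real.exp_le_exp.mpr h1
        _ ≤ 1 + 2 * y := exp_le_one_add_two_mul hy0 hy12
    have hl2l1 : E.lam 2 ≤ 2 * E.lam 1 := by
      have hBl1 : B ≤ E.lam 1 := by linarith
      linarith
    have hmain : E.lam 2 * (E.lam 2 / E.lam 1) ^ (c : ℝ) ≤ E.lam n := by
      have h1 : E.lam 2 * (E.lam 2 / E.lam 1) ^ (c : ℝ) ≤ E.lam 2 * (1 + 2 * y) :=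
        mul_le_mul_of_nonneg_left hrpc hl2.le
      have hy2 : y * E.lam 2 ≤ 2 * (c * g) := by
        rw [hydef, div_mul_eq_mul_div, div_le_iff₀ hl1]
        have hcg0 : 0 ≤ c * g := by positivity
        calc c * g * E.lam 2 ≤ c * g * (2 * E.lam 1) :=
              mul_le_mul_of_nonneg_left hl2l1 hcg0
          _ = 2 * (c * g) * E.lam 1 := by ring
      have h2 : E.lam 2 * (1 + 2 * y) ≤ E.lam 1 + (1 + 4 * c) * B := by
        have hcg : c * g ≤ c * B := mul_le_mul_of_nonneg_left hgB hc0.le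
        have hexp : E.lam 2 * (1 + 2 * y) = E.lam 2 + 2 * (y * E.lam 2) := by ring
        rw [hexp]
        linarith [hy2, hcg, hgB]
      linarith
    -- conclude on δ
    set r := E.lam 1 / E.lam 2 with hrdef
    have hr0 : 0 < r := by positivity
    have hstep : E.lam 1 / E.lam n ≤ r ^ (1 + c : ℝ) := by
      rw [div_le_iff₀ hln]
      have hinv : (E.lam 2 / E.lam 1) ^ (c : ℝ) = (r ^ (c : ℝ))⁻¹ := by
        rw [hrdef, ← Real.inv_rpow (by positivity), inv_div]
      have hrc : (0:ℝ) < r ^ (c : ℝ) := Real.rpow_pos_of_pos hr0 _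
      have hid : r ^ (1 + c : ℝ) * (E.lam 2 * (E.lam 2 / E.lam 1) ^ (c : ℝ)) = E.lam 1 := by
        rw [hinv, Real.rpow_add hr0, Real.rpow_one, hrdef]
        field_simp
      calc E.lam 1 = r ^ (1 + c : ℝ) * (E.lam 2 * (E.lam 2 / E.lam 1) ^ (c : ℝ)) := hid.symm
        _ ≤ r ^ (1 + c : ℝ) * E.lam n :=
            mul_le_mul_of_nonneg_left hmain (Real.rpow_nonneg hr0.le _)
    have hrpow : (r ^ (1 + c : ℝ)) ^ (2:ℕ) = (r ^ (2:ℕ)) ^ (1 + c : ℝ) := by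
      rw [← Real.rpow_natCast (r ^ (1 + c : ℝ)) 2, ← Real.rpow_natCast r 2,
        ← Real.rpow_mul hr0.le, ← Real.rpow_mul hr0.le]
      norm_num [mul_comm]
    calc E.δ n = (E.lam 1 / E.lam n) ^ (2:ℕ) := by
          rw [EigenData.δ, div_pow]
      _ ≤ (r ^ (1 + c : ℝ)) ^ (2:ℕ) := by
          apply pow_le_pow_left₀ (by positivity) hstep
      _ = (r ^ (2:ℕ)) ^ (1 + c : ℝ) := hrpow
      _ = E.δ 2 ^ (1 + c : ℝ) := by
          rw [hrdef, div_pow, EigenData.δ]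
  -- cardinality
  have hsub : ((Finset.Icc 2 N).filter (fun n => E.δ 2 ^ (1 + c : ℝ) < E.δ n))
      ⊆ Finset.Ico 2 m := by
    intro n hn
    rw [Finset.mem_filter, Finset.mem_Icc] at hn
    obtain ⟨⟨h2n, hnN⟩, hδn⟩ := hn
    rw [Finset.mem_Ico]
    refine ⟨h2n, ?_⟩
    by_contra hge
    push_neg at hge
    exact hkey n h2n hnN hge hδn
  have hcard := Finset.card_le_card hsub
  rw [Nat.card_Ico] at hcard
  calc (((Finset.Icc 2 N).filter (fun n => E.δ 2 ^ (1 + c : ℝ) < E.δ n)).card : ℝ)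
      ≤ ((m - 2 : ℕ) : ℝ) := by exact_mod_cast hcard
    _ ≤ (m:ℝ) - 2 := by
        rw [Nat.cast_sub hm2]
        norm_num
    _ ≤ (N:ℝ) ^ (2 * s) := by linarith
end
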